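/- Let r ∈ ℝ, μ > r, σ > 0, α > 0, T > 0 and set θ := (μ − r)/σ. Define V : [0,T] × ℝ → ℝ by V(t,x) = −exp(−α x e^{r(T−t)} − (θ²/2)(T−t)). Then for every t ∈ [0,T] and x ∈ ℝ: (i) the second partial derivative ∂²V/∂x²(t,x) = −α² e^{2r(T−t)} exp(−α x e^{r(T−t)} − (θ²/2)(T−t)) is strictly negative; (ii) V(T,x) = −e^{−αx}; and (iii) V satisfies the reduced Hamilton–Jacobi–Bellman equation ∂V/∂t(t,x) + r x ∂V/∂x(t,x) − (θ²/2)·(∂V/∂x(t,x))²/(∂²V/∂x²(t,x)) = 0. -/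

import Mathlib

open Real

lemma aux_dx (a c : ℝ) (x : ℝ) :
    deriv (fun x' : ℝ => -Real.exp (-(a * x') - c)) x
      = a * Real.exp (-(a * x) - c) := by
  have h1 : HasDerivAt (fun x' : ℝ => -(a * x') - c) (-a) x := by
    simpa using (((hasDerivAt_id x).const_mul a).neg.sub_const c)
  have h2 : HasDerivAt (fun x' : ℝ => -Real.exp (-(a * x') - c)) _ x := (h1.exp).neg
  have := h2.deriv
  rw [this]; ring

/-- The candidate value function `V(t,x) = -exp(-α x e^{r(T-t)} - (θ²/2)(T-t))` solves the
reduced Hamilton–Jacobi–Bellman equation, has strictly negative second space derivative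
(given explicitly), and satisfies the terminal condition `V(T,x) = -e^{-αx}`. -/
theorem stmt_0 (r μ σ α T : ℝ) (hμ : r < μ) (hσ : 0 < σ) (hα : 0 < α) (hT : 0 < T)
    (θ : ℝ) (hθ : θ = (μ - r) / σ)
    (V : ℝ → ℝ → ℝ)
    (hV : ∀ t x, V t x = -Real.exp (-(α * x * Real.exp (r * (T - t))) - θ ^ 2 / 2 * (T - t))) :
    ∀ t ∈ Set.Icc (0 : ℝ) T, ∀ x : ℝ,
      ((deriv (deriv (fun x' => V t x')) x
          = -(α ^ 2) * Real.exp (2 * r * (T - t))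
              * Real.exp (-(α * x * Real.exp (r * (T - t))) - θ ^ 2 / 2 * (T - t))
        ∧ deriv (deriv (fun x' => V t x')) x < 0)
      ∧ V T x = -Real.exp (-(α * x))
      ∧ deriv (fun t' => V t' x) t + r * x * deriv (fun x' => V t x') x
          - θ ^ 2 / 2 * (deriv (fun x' => V t x') x) ^ 2
              / deriv (deriv (fun x' => V t x')) x = 0) := by
  intro t ht x
  set A : ℝ := Real.exp (r * (T - t)) with hA
  set c : ℝ := θ ^ 2 / 2 * (T - t) with hc
  have hVx : (fun x' => V t x') = fun x' : ℝ => -Real.exp (-(α * A * x') - c) := by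
    funext x'; rw [hV, ← hA, ← hc]; congr 2; ring
  -- first space derivative
  have hd1 : deriv (fun x' => V t x') = fun x' : ℝ => (α * A) * Real.exp (-(α * A * x') - c) := by
    funext y; rw [hVx, aux_dx]
  -- second space derivative
  have hd2 : deriv (deriv (fun x' => V t x')) x
      = -((α * A) ^ 2) * Real.exp (-(α * A * x) - c) := by
    rw [hd1]
    have h1 : HasDerivAt (fun x' : ℝ => -(α * A * x') - c) (-(α * A)) x := by
      simpa using (((hasDerivAt_id x).const_mul (α * A)).neg.sub_const c)
    have h2 := (h1.exp).const_mul (α * A)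
    rw [h2.deriv]; ring
  -- time derivative
  have hVt : (fun t' => V t' x)
      = fun t' : ℝ => -Real.exp (-(α * x * Real.exp (r * (T - t'))) - θ ^ 2 / 2 * (T - t')) := by
    funext t'; rw [hV]
  have hdt : deriv (fun t' => V t' x) t
      = -((α * x * r * A + θ ^ 2 / 2) * Real.exp (-(α * x * A) - c)) := by
    rw [hVt]
    have hin : HasDerivAt (fun t' : ℝ => r * (T - t')) (-r) t := by
      simpa using ((hasDerivAt_id t).const_sub T).const_mul r
    have hexp : HasDerivAt (fun t' : ℝ => Real.exp (r * (T - t'))) (Real.exp (r * (T - t)) * (-r)) t :=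
      hin.exp
    have h1 : HasDerivAt (fun t' : ℝ => -(α * x * Real.exp (r * (T - t'))) - θ ^ 2 / 2 * (T - t'))
        (-(α * x * (Real.exp (r * (T - t)) * (-r))) - θ ^ 2 / 2 * (-1)) t := by
      exact ((hexp.const_mul (α * x)).neg).sub (((hasDerivAt_id t).const_sub T).const_mul (θ ^ 2 / 2))
    have h2 : HasDerivAt (fun t' : ℝ => -Real.exp (-(α * x * Real.exp (r * (T - t'))) - θ ^ 2 / 2 * (T - t'))) _ t := (h1.exp).neg
    rw [h2.deriv, ← hA, hc]
    ring_nf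
  have hA2 : Real.exp (2 * r * (T - t)) = A ^ 2 := by
    rw [hA, sq, ← Real.exp_add]; congr 1; ring
  have hd1' : deriv (fun x' => V t x') x = (α * A) * Real.exp (-(α * A * x) - c) := by
    rw [hd1]
  have hE : -(α * x * A) - c = -(α * A * x) - c := by ring
  have hEpos : 0 < Real.exp (-(α * A * x) - c) := Real.exp_pos _
  have hApos : 0 < A := Real.exp_pos _
  refine ⟨⟨?_, ?_⟩, ?_, ?_⟩
  · rw [hd2, hA2, hE]; ring
  · rw [hd2]
    have : 0 < (α * A) ^ 2 := by positivity
    nlinarith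
  · rw [hV]; simp
  · rw [hdt, hd2, hd1', hE]
    have hne : -((α * A) ^ 2) * Real.exp (-(α * A * x) - c) ≠ 0 := by
      have : (α * A) ^ 2 > 0 := by positivity
      nlinarith
    field_simp
    ring
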